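/- For all real y₁ ≠ y₂, the Cauchy improper-mixture intensity with p = 1 satisfies λ_{2,1}(y₁, y₂) = ∫_0^∞ ∫_{−∞}^∞ f(y₁; θ₁, θ₂) f(y₂; θ₁, θ₂) θ₂^{−1} dθ₁ dθ₂ = 1/(2|y₁ − y₂|). -/

import Mathlib

open MeasureTheory
open scoped ENNReal

/-- The Cauchy improper-mixture intensity
`λ_{n,p}(y) = ∫₀^∞ ∫_{-∞}^∞ ∏ᵢ f(yᵢ; θ₁, θ₂) θ₂^{-p} dθ₁ dθ₂`,
where `f(u; θ₁, θ₂) = θ₂ / (π((u - θ₁)² + θ₂²))` is the Cauchy density. -/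
noncomputable def cauchyIntensity (n : ℕ) (p : ℝ) (y : Fin n → ℝ) : ℝ≥0∞ :=
  ∫⁻ θ₂ in Set.Ioi (0 : ℝ), ∫⁻ θ₁ : ℝ,
    ENNReal.ofReal ((∏ i, θ₂ / (Real.pi * ((y i - θ₁) ^ 2 + θ₂ ^ 2))) * θ₂ ^ (-p))

namespace CauchyAux

open Filter Real
open scoped Topology

lemma logdiff (a b c : ℝ) (hc : c ≠ 0) (l : Filter ℝ)
    (hl : Tendsto (fun u : ℝ => u⁻¹) l (𝓝 0)) (hne : ∀ᶠ u in l, u ≠ 0) :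
    Tendsto (fun u : ℝ => Real.log ((u - a) ^ 2 + c ^ 2) - Real.log ((u - b) ^ 2 + c ^ 2)) l
      (𝓝 0) := by
  have hlog : ∀ (e : ℝ), Tendsto (fun u : ℝ =>
      Real.log ((1 - e * u⁻¹) ^ 2 + (c * u⁻¹) ^ 2)) l (𝓝 0) := by
    intro e
    have h1 : Tendsto (fun u : ℝ => 1 - e * u⁻¹) l (𝓝 1) := by
      simpa using tendsto_const_nhds.sub (hl.const_mul e)
    have h2 : Tendsto (fun u : ℝ => c * u⁻¹) l (𝓝 0) := by simpa using hl.const_mul c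
    have key : Tendsto (fun u : ℝ => (1 - e * u⁻¹) ^ 2 + (c * u⁻¹) ^ 2) l (𝓝 1) := by
      simpa using (h1.pow 2).add (h2.pow 2)
    have := (Real.continuousAt_log one_ne_zero).tendsto.comp key
    simpa [Function.comp_def] using this
  have := (hlog a).sub (hlog b)
  rw [sub_zero] at this
  refine this.congr' ?_
  filter_upwards [hne] with u hu
  have hu2 : (u:ℝ) ^ 2 ≠ 0 := pow_ne_zero _ hu
  have expand : ∀ e : ℝ, (u - e) ^ 2 + c ^ 2 = u ^ 2 * ((1 - e * u⁻¹) ^ 2 + (c * u⁻¹) ^ 2) := by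
    intro e; field_simp
  have posX : ∀ e : ℝ, (0:ℝ) < (1 - e * u⁻¹) ^ 2 + (c * u⁻¹) ^ 2 := by
    intro e
    have : (c * u⁻¹) ≠ 0 := mul_ne_zero hc (inv_ne_zero hu)
    positivity
  rw [expand a, expand b, Real.log_mul hu2 (posX a).ne', Real.log_mul hu2 (posX b).ne']
  ring

lemma arctan_top (a c : ℝ) (hc : 0 < c) :
    Tendsto (fun u : ℝ => Real.arctan ((u - a) / c)) atTop (𝓝 (π / 2)) := by
  have h : Tendsto (fun u : ℝ => (u - a) / c) atTop atTop :=
    (tendsto_atTop_add_const_right _ (-a) tendsto_id).atTop_div_const hc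
  exact (tendsto_nhds_of_tendsto_nhdsWithin Real.tendsto_arctan_atTop).comp h

lemma arctan_bot (a c : ℝ) (hc : 0 < c) :
    Tendsto (fun u : ℝ => Real.arctan ((u - a) / c)) atBot (𝓝 (-(π / 2))) := by
  have h : Tendsto (fun u : ℝ => (u - a) / c) atBot atBot :=
    (tendsto_atBot_add_const_right _ (-a) tendsto_id).atBot_div_const hc
  exact (tendsto_nhds_of_tendsto_nhdsWithin Real.tendsto_arctan_atBot).comp h

lemma hasDerivAt_logA (a c x : ℝ) (hc : 0 < c) :
    HasDerivAt (fun u : ℝ => Real.log ((u - a) ^ 2 + c ^ 2))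
      ((2 * (x - a)) / ((x - a) ^ 2 + c ^ 2)) x := by
  have h1 : HasDerivAt (fun u : ℝ => (u - a) ^ 2 + c ^ 2) (2 * (x - a)) x := by
    simpa using (((hasDerivAt_id x).sub_const a).pow 2).add_const (c ^ 2)
  have hpos : (0:ℝ) < (x - a) ^ 2 + c ^ 2 := by positivity
  have := (Real.hasDerivAt_log hpos.ne').comp x h1
  refine this.congr_deriv (Eq.symm ?_)
  field_simp

lemma hasDerivAt_atanA (a c x : ℝ) (hc : 0 < c) :
    HasDerivAt (fun u : ℝ => Real.arctan ((u - a) / c)) (c / ((x - a) ^ 2 + c ^ 2)) x := by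
  have h1 : HasDerivAt (fun u : ℝ => (u - a) / c) (1 / c) x := by
    simpa [div_eq_mul_inv] using ((hasDerivAt_id x).sub_const a).mul_const c⁻¹
  have := (Real.hasDerivAt_arctan ((x - a) / c)).comp x h1
  refine this.congr_deriv (Eq.symm ?_)
  field_simp
  ring

lemma hasDerivAt_F (a b c : ℝ) (hab : a ≠ b) (hc : 0 < c) (x : ℝ) :
    HasDerivAt (fun u : ℝ =>
      (-c / (Real.pi ^ 2 * (a - b) * ((a - b) ^ 2 + 4 * c ^ 2))) *
        (Real.log ((u - a) ^ 2 + c ^ 2) - Real.log ((u - b) ^ 2 + c ^ 2)) +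
      (1 / (Real.pi ^ 2 * ((a - b) ^ 2 + 4 * c ^ 2))) *
        (Real.arctan ((u - a) / c) + Real.arctan ((u - b) / c)))
      (c / (Real.pi ^ 2 * (((x - a) ^ 2 + c ^ 2) * ((x - b) ^ 2 + c ^ 2)))) x := by
  have h1 := ((hasDerivAt_logA a c x hc).sub (hasDerivAt_logA b c x hc)).const_mul
    (-c / (Real.pi ^ 2 * (a - b) * ((a - b) ^ 2 + 4 * c ^ 2)))
  have h2 := ((hasDerivAt_atanA a c x hc).add (hasDerivAt_atanA b c x hc)).const_mul
    (1 / (Real.pi ^ 2 * ((a - b) ^ 2 + 4 * c ^ 2)))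
  have := h1.add h2
  refine this.congr_deriv (Eq.symm ?_)
  have hA : (0:ℝ) < (x - a) ^ 2 + c ^ 2 := by positivity
  have hB : (0:ℝ) < (x - b) ^ 2 + c ^ 2 := by positivity
  have hS : (0:ℝ) < (a - b) ^ 2 + 4 * c ^ 2 := by positivity
  have hd : a - b ≠ 0 := sub_ne_zero.mpr hab
  have hpi : Real.pi ≠ 0 := Real.pi_ne_zero
  field_simp
  ring

lemma integrable_g (a b c : ℝ) (hc : 0 < c) :
    Integrable (fun u : ℝ =>
      c / (Real.pi ^ 2 * (((u - a) ^ 2 + c ^ 2) * ((u - b) ^ 2 + c ^ 2)))) := by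
  have h2 : Integrable (fun x : ℝ => (x ^ 2 + c ^ 2)⁻¹) := by
    have h1 : Integrable (fun x : ℝ => (c ^ 2)⁻¹ * (1 + (x / c) ^ 2)⁻¹) :=
      (integrable_inv_one_add_sq.comp_div hc.ne').const_mul _
    refine h1.congr (ae_of_all _ (fun x => ?_))
    simp only
    rw [show (1 + (x / c) ^ 2) = (x ^ 2 + c ^ 2) / c ^ 2 by field_simp; ring]
    field_simp
  have hbound : Integrable (fun u : ℝ => (c / (Real.pi ^ 2 * c ^ 2)) * ((u - a) ^ 2 + c ^ 2)⁻¹) :=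
    (h2.comp_sub_right a).const_mul _
  have hcont : Continuous (fun u : ℝ =>
      c / (Real.pi ^ 2 * (((u - a) ^ 2 + c ^ 2) * ((u - b) ^ 2 + c ^ 2)))) := by
    refine continuous_const.div (by fun_prop) (fun u => ?_)
    have hA : (0:ℝ) < (u - a) ^ 2 + c ^ 2 := by positivity
    have hB : (0:ℝ) < (u - b) ^ 2 + c ^ 2 := by positivity
    positivity
  refine hbound.mono' hcont.aestronglyMeasurable (ae_of_all _ (fun u => ?_))
  have hA : (0:ℝ) < (u - a) ^ 2 + c ^ 2 := by positivity
  have hB : (0:ℝ) < (u - b) ^ 2 + c ^ 2 := by positivity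
  have hpi : (0:ℝ) < Real.pi := Real.pi_pos
  rw [Real.norm_eq_abs, abs_of_nonneg (by positivity)]
  have hrw : (c / (Real.pi ^ 2 * c ^ 2)) * ((u - a) ^ 2 + c ^ 2)⁻¹ =
      c / (Real.pi ^ 2 * c ^ 2 * ((u - a) ^ 2 + c ^ 2)) := by
    field_simp
  rw [hrw]
  apply div_le_div_of_nonneg_left hc.le (by positivity)
  nlinarith [mul_nonneg (mul_nonneg (sq_nonneg Real.pi) hA.le) (sq_nonneg (u - b))]

lemma inner_val (a b c : ℝ) (hab : a ≠ b) (hc : 0 < c) :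
    ∫ u : ℝ, c / (Real.pi ^ 2 * (((u - a) ^ 2 + c ^ 2) * ((u - b) ^ 2 + c ^ 2))) =
      2 / (Real.pi * ((a - b) ^ 2 + 4 * c ^ 2)) := by
  set k1 := -c / (Real.pi ^ 2 * (a - b) * ((a - b) ^ 2 + 4 * c ^ 2)) with hk1
  set k3 := 1 / (Real.pi ^ 2 * ((a - b) ^ 2 + 4 * c ^ 2)) with hk3
  have htop : Tendsto (fun u : ℝ =>
      k1 * (Real.log ((u - a) ^ 2 + c ^ 2) - Real.log ((u - b) ^ 2 + c ^ 2)) +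
      k3 * (Real.arctan ((u - a) / c) + Real.arctan ((u - b) / c))) atTop (𝓝 (k3 * π)) := by
    have h1 := (logdiff a b c hc.ne' atTop tendsto_inv_atTop_zero
      ((eventually_gt_atTop 0).mono (fun u hu => hu.ne'))).const_mul k1
    have h2 := ((arctan_top a c hc).add (arctan_top b c hc)).const_mul k3
    have := h1.add h2
    simpa [add_halves] using this
  have hbot : Tendsto (fun u : ℝ =>
      k1 * (Real.log ((u - a) ^ 2 + c ^ 2) - Real.log ((u - b) ^ 2 + c ^ 2)) +
      k3 * (Real.arctan ((u - a) / c) + Real.arctan ((u - b) / c))) atBot (𝓝 (-(k3 * π))) := by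
    have hinv : Tendsto (fun u : ℝ => u⁻¹) atBot (𝓝 0) := by
      have h0 : Tendsto (fun u : ℝ => u⁻¹) atTop (𝓝 (0:ℝ)) := tendsto_inv_atTop_zero
      have h := h0.comp (tendsto_neg_atBot_atTop : Tendsto (fun u : ℝ => -u) atBot atTop)
      have h2 := h.neg
      rw [neg_zero] at h2
      refine h2.congr (fun u => ?_)
      simp [Function.comp, inv_neg]
    have h1 := (logdiff a b c hc.ne' atBot hinv
      ((eventually_lt_atBot 0).mono (fun u hu => hu.ne))).const_mul k1
    have h2 := ((arctan_bot a c hc).add (arctan_bot b c hc)).const_mul k3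
    have := h1.add h2
    have heq : k1 * 0 + k3 * (-(π / 2) + -(π / 2)) = -(k3 * π) := by ring
    rw [heq] at this
    exact this
  rw [integral_of_hasDerivAt_of_tendsto (hasDerivAt_F a b c hab hc) (integrable_g a b c hc)
    hbot htop]
  have hS : (0:ℝ) < (a - b) ^ 2 + 4 * c ^ 2 := by positivity
  rw [hk3]
  field_simp
  ring

lemma hasDerivAt_G (d : ℝ) (hd : d ≠ 0) (x : ℝ) :
    HasDerivAt (fun c : ℝ => (1 / (Real.pi * |d|)) * Real.arctan (2 * c / |d|))
      (2 / (Real.pi * (d ^ 2 + 4 * x ^ 2))) x := by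
  have hda : |d| ≠ 0 := abs_ne_zero.mpr hd
  have h1 : HasDerivAt (fun c : ℝ => 2 * c / |d|) (2 / |d|) x := by
    simpa using ((hasDerivAt_id x).const_mul 2).div_const |d|
  have h2 := ((Real.hasDerivAt_arctan (2 * x / |d|)).comp x h1).const_mul (1 / (Real.pi * |d|))
  refine h2.congr_deriv (Eq.symm ?_)
  have habs : |d| * |d| = d ^ 2 := by rw [← sq_abs d]; ring
  have hpi : Real.pi ≠ 0 := Real.pi_ne_zero
  field_simp
  linear_combination habs

lemma outer_tendsto (d : ℝ) (hd : d ≠ 0) :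
    Tendsto (fun c : ℝ => (1 / (Real.pi * |d|)) * Real.arctan (2 * c / |d|)) atTop
      (𝓝 (1 / (2 * |d|))) := by
  have hda : (0:ℝ) < |d| := abs_pos.mpr hd
  have h : Tendsto (fun c : ℝ => 2 * c / |d|) atTop atTop :=
    (tendsto_id.const_mul_atTop two_pos).atTop_div_const hda
  have := ((tendsto_nhds_of_tendsto_nhdsWithin Real.tendsto_arctan_atTop).comp h).const_mul
    (1 / (Real.pi * |d|))
  convert this using 2
  · rfl
  field_simp

end CauchyAux

open CauchyAux Filter Real
open scoped Topology

/-- For `y₁ ≠ y₂`, the Cauchy improper-mixture intensity with `p = 1` is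
`λ_{2,1}(y₁,y₂) = 1/(2|y₁ - y₂|)`. -/
theorem cauchyIntensity_two_one (y₁ y₂ : ℝ) (h : y₁ ≠ y₂) :
    cauchyIntensity 2 1 ![y₁, y₂] = ENNReal.ofReal (1 / (2 * |y₁ - y₂|)) := by
  have hd : y₁ - y₂ ≠ 0 := sub_ne_zero.mpr h
  have hpi : (0:ℝ) < Real.pi := Real.pi_pos
  unfold cauchyIntensity
  have hinner : ∀ᵐ c ∂(volume.restrict (Set.Ioi (0:ℝ))), (∫⁻ u : ℝ,
      ENNReal.ofReal ((∏ i, c / (Real.pi * ((![y₁, y₂] i - u) ^ 2 + c ^ 2))) * c ^ (-(1:ℝ)))) =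
      ENNReal.ofReal (2 / (Real.pi * ((y₁ - y₂) ^ 2 + 4 * c ^ 2))) := by
    rw [ae_restrict_iff' measurableSet_Ioi]
    refine ae_of_all _ (fun c hc => ?_)
    rw [Set.mem_Ioi] at hc
    have hpt : ∀ u : ℝ, ((∏ i, c / (Real.pi * ((![y₁, y₂] i - u) ^ 2 + c ^ 2))) * c ^ (-(1:ℝ)))
        = c / (Real.pi ^ 2 * (((u - y₁) ^ 2 + c ^ 2) * ((u - y₂) ^ 2 + c ^ 2))) := by
      intro u
      have hA : (0:ℝ) < (u - y₁) ^ 2 + c ^ 2 := by positivity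
      have hB : (0:ℝ) < (u - y₂) ^ 2 + c ^ 2 := by positivity
      rw [Fin.prod_univ_two]
      simp only [Matrix.cons_val_zero, Matrix.cons_val_one, Matrix.head_cons]
      rw [show (-(1:ℝ)) = ((-1 : ℝ)) by norm_num, Real.rpow_neg_one,
        show (y₁ - u) ^ 2 = (u - y₁) ^ 2 by ring, show (y₂ - u) ^ 2 = (u - y₂) ^ 2 by ring]
      field_simp
    simp_rw [hpt]
    rw [← MeasureTheory.ofReal_integral_eq_lintegral_ofReal (integrable_g y₁ y₂ c hc)
      (ae_of_all _ (fun u => by positivity))]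
    rw [inner_val y₁ y₂ c h hc]
  rw [lintegral_congr_ae hinner]
  set G := fun c : ℝ => (1 / (Real.pi * |y₁ - y₂|)) * Real.arctan (2 * c / |y₁ - y₂|) with hG
  have hcont : ContinuousWithinAt G (Set.Ici (0:ℝ)) 0 :=
    (hasDerivAt_G (y₁ - y₂) hd 0).continuousAt.continuousWithinAt
  have hderiv : ∀ x ∈ Set.Ioi (0:ℝ), HasDerivAt G
      (2 / (Real.pi * ((y₁ - y₂) ^ 2 + 4 * x ^ 2))) x := fun x _ => hasDerivAt_G (y₁ - y₂) hd x
  have hpos : ∀ x ∈ Set.Ioi (0:ℝ), 0 ≤ 2 / (Real.pi * ((y₁ - y₂) ^ 2 + 4 * x ^ 2)) :=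
    fun x _ => by positivity
  have hlim := outer_tendsto (y₁ - y₂) hd
  have hint : IntegrableOn (fun x : ℝ => 2 / (Real.pi * ((y₁ - y₂) ^ 2 + 4 * x ^ 2)))
      (Set.Ioi (0:ℝ)) :=
    integrableOn_Ioi_deriv_of_nonneg hcont hderiv hpos hlim
  rw [← MeasureTheory.ofReal_integral_eq_lintegral_ofReal hint
    (ae_of_all _ (fun x => by positivity))]
  rw [MeasureTheory.integral_Ioi_of_hasDerivAt_of_nonneg hcont hderiv hpos hlim]
  simp [hG, Real.arctan_zero]
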